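/- Let X_1, …, X_n (n ≥ 2) be i.i.d. real random variables with finite fourth moment, mean μ and variance v. Then the sample variance s² := (1/(n−1)) Σ_{i=1}^n (X_i − X̄)² satisfies E[(s² − v)²] ≤ (4/n)·E[(X_1 − μ)⁴]. -/

import Mathlib

open MeasureTheory ProbabilityTheory

open Finset
open scoped ENNReal

section Aux
variable {Ω : Type*} [MeasurableSpace Ω] {μ : Measure Ω}

lemma iIndepFun_congr_ae {n : ℕ} {X X' : Fin n → Ω → ℝ}
    (h : iIndepFun X μ) (hae : ∀ i, X i =ᵐ[μ] X' i) :
    iIndepFun X' μ := by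
  rw [iIndepFun_iff_measure_inter_preimage_eq_mul] at h ⊢
  intro S sets H
  have hall : ∀ᵐ ω ∂μ, ∀ i, X i ω = X' i ω := ae_all_iff.2 hae
  have e1 : (⋂ i ∈ S, X' i ⁻¹' sets i) =ᵐ[μ] (⋂ i ∈ S, X i ⁻¹' sets i) := by
    rw [Filter.eventuallyEq_set]
    filter_upwards [hall] with ω hω
    simp only [Set.mem_iInter, Set.mem_preimage]
    constructor
    · intro h' i hi; rw [hω i]; exact h' i hi
    · intro h' i hi; rw [← hω i]; exact h' i hi
  rw [measure_congr e1, h S H]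
  refine Finset.prod_congr rfl fun i _ => measure_congr ?_
  rw [Filter.eventuallyEq_set]
  filter_upwards [hae i] with ω hω
  simp [Set.mem_preimage, hω]


lemma sample_var_decomp {n : ℕ} (hn : 2 ≤ n) (v : ℝ) (y : Fin n → ℝ) :
    (1 / ((n : ℝ) - 1)) * ∑ i, (y i - (1 / (n : ℝ)) * ∑ j, y j) ^ 2 - v
      = (1 / (n : ℝ)) * ∑ i, ((y i) ^ 2 - v)
        - (1 / ((n : ℝ) * ((n : ℝ) - 1))) * ∑ p ∈ Finset.univ.offDiag, y p.1 * y p.2 := by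
  have hn2 : (2 : ℝ) ≤ (n : ℝ) := by exact_mod_cast hn
  have hn0 : (n : ℝ) ≠ 0 := by linarith
  have hn1 : (n : ℝ) - 1 ≠ 0 := by linarith
  set S := ∑ j, y j with hS
  set Q := ∑ i, (y i) ^ 2 with hQ
  set D := ∑ p ∈ Finset.univ.offDiag, y p.1 * y p.2 with hD
  have hSS : S * S = Q + D := by
    rw [hS, Finset.sum_mul_sum, ← Finset.sum_product' (f := fun i j => y i * y j),
      ← Finset.diag_union_offDiag, Finset.sum_union (Finset.disjoint_diag_offDiag _),
      Finset.sum_diag]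
    simp [hQ, hD, sq]
  have h1 : ∑ i, (y i - (1/(n:ℝ)) * S) ^ 2
      = Q - 2*((1/(n:ℝ))*S)*S + (n:ℝ) * ((1/(n:ℝ))*S) ^ 2 := by
    have e : ∀ i ∈ Finset.univ, (y i - (1/(n:ℝ))*S) ^ 2
        = (y i) ^ 2 - (2*((1/(n:ℝ))*S)) * (y i) + ((1/(n:ℝ))*S) ^ 2 := fun i _ => by ring
    rw [Finset.sum_congr rfl e, Finset.sum_add_distrib, Finset.sum_sub_distrib,
      ← Finset.mul_sum, Finset.sum_const, Finset.card_univ, Fintype.card_fin, nsmul_eq_mul,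
      ← hQ, ← hS]
  have h2 : ∑ i, ((y i) ^ 2 - v) = Q - (n:ℝ) * v := by
    rw [Finset.sum_sub_distrib, Finset.sum_const, Finset.card_univ, Fintype.card_fin,
      nsmul_eq_mul, ← hQ]
  have hDval : D = S * S - Q := by linarith
  rw [h1, h2, hDval]
  field_simp
  ring


lemma memLp_mul' {f g : Ω → ℝ} {p q r : ℝ≥0∞} (hf : MemLp f p μ) (hg : MemLp g q μ)
    (h : 1/r = 1/p + 1/q) : MemLp (fun ω => f ω * g ω) r μ := by
  haveI : ENNReal.HolderTriple p q r := ⟨by simpa only [one_div] using h.symm⟩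
  exact MemLp.smul (φ := f) (f := g) hg hf

lemma key_lemma [IsProbabilityMeasure μ] {n : ℕ} (hn : 2 ≤ n) (Y : Fin n → Ω → ℝ)
    (hmeas : ∀ i, Measurable (Y i))
    (hindep : iIndepFun Y μ)
    (hL4 : ∀ i, MemLp (Y i) 4 μ)
    (v β : ℝ)
    (h0 : ∀ i, ∫ ω, Y i ω ∂μ = 0)
    (hv : ∀ i, ∫ ω, (Y i ω) ^ 2 ∂μ = v)
    (hβ : ∀ i, ∫ ω, (Y i ω) ^ 4 ∂μ = β) :
    ∫ ω, ((1 / ((n : ℝ) - 1)) * ∑ i, (Y i ω - (1 / (n : ℝ)) * ∑ j, Y j ω) ^ 2 - v) ^ 2 ∂μ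
      ≤ (4 / n) * β := by
  classical
  set Z : Fin n → Ω → ℝ := fun i ω => Y i ω ^ 2 - v with hZ
  -- exponents / integrability
  have h24 : (1 : ℝ≥0∞)/2 = 1/4 + 1/4 := by
    rw [ENNReal.div_add_div_same]
    rw [ENNReal.div_eq_div_iff] <;> norm_num
  have h122 : (1 : ℝ≥0∞)/1 = 1/2 + 1/2 := by
    rw [ENNReal.div_add_div_same]
    rw [ENNReal.div_eq_div_iff] <;> norm_num
  have hY2 : ∀ i, MemLp (Y i) 2 μ := fun i => (hL4 i).mono_exponent (by norm_num)
  have hYsq2 : ∀ i, MemLp (fun ω => Y i ω ^ 2) 2 μ := fun i => by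
    have := memLp_mul' (hL4 i) (hL4 i) h24
    simpa [sq] using this
  have hZ2 : ∀ i, MemLp (Z i) 2 μ := fun i => (hYsq2 i).sub (memLp_const v)
  have hYY2 : ∀ i j, MemLp (fun ω => Y i ω * Y j ω) 2 μ := fun i j =>
    memLp_mul' (hL4 i) (hL4 j) h24
  have intOf : ∀ {f g : Ω → ℝ}, MemLp f 2 μ → MemLp g 2 μ →
      Integrable (fun ω => f ω * g ω) μ := fun hf hg =>
    memLp_one_iff_integrable.mp (by simpa using memLp_mul' hf hg h122)
  have intY : ∀ i, Integrable (Y i) μ := fun i => (hY2 i).integrable one_le_two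
  have intZ : ∀ i, Integrable (Z i) μ := fun i => (hZ2 i).integrable one_le_two
  have intYsq : ∀ i, Integrable (fun ω => Y i ω ^ 2) μ := fun i =>
    (hYsq2 i).integrable one_le_two
  have intYY : ∀ i j, Integrable (fun ω => Y i ω * Y j ω) μ := fun i j =>
    intOf (hY2 i) (hY2 j)
  have intZZ : ∀ i j, Integrable (fun ω => Z i ω * Z j ω) μ := fun i j =>
    intOf (hZ2 i) (hZ2 j)
  have intZYY : ∀ i j k, Integrable (fun ω => Z i ω * (Y j ω * Y k ω)) μ := fun i j k =>
    intOf (hZ2 i) (hYY2 j k)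
  have intYYYY : ∀ i j k l, Integrable (fun ω => (Y i ω * Y j ω) * (Y k ω * Y l ω)) μ :=
    fun i j k l => intOf (hYY2 i j) (hYY2 k l)
  have intZY : ∀ i j, Integrable (fun ω => Z i ω * Y j ω) μ := fun i j =>
    intOf (hZ2 i) (hY2 j)
  have intYYY : ∀ i j k, Integrable (fun ω => Y i ω * Y j ω * Y k ω) μ := fun i j k =>
    intOf (hYY2 i j) (hY2 k)
  -- basic expectations
  have EZ : ∀ i, ∫ ω, Z i ω ∂μ = 0 := fun i => by
    rw [hZ]
    rw [integral_sub (intYsq i) (integrable_const v), hv i, integral_const]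
    simp
  have EZZdiag : ∀ i, ∫ ω, Z i ω * Z i ω ∂μ = β - v ^ 2 := fun i => by
    have e : ∀ ω, Z i ω * Z i ω = Y i ω ^ 4 - 2*v*(Y i ω ^ 2) + v^2 := fun ω => by
      simp only [hZ]; ring
    have intY4 : Integrable (fun ω => Y i ω ^ 4) μ := by
      have := (hYsq2 i).integrable_sq
      simpa [← pow_mul] using this
    calc ∫ ω, Z i ω * Z i ω ∂μ
        = ∫ ω, (Y i ω ^ 4 - 2*v*(Y i ω ^ 2) + v^2) ∂μ := by
          exact integral_congr_ae (Filter.Eventually.of_forall e)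
      _ = β - v ^ 2 := by
          have ia : Integrable (fun ω => Y i ω ^ 4 - 2*v*(Y i ω ^ 2)) μ :=
            intY4.sub ((intYsq i).const_mul (2*v))
          rw [integral_add ia (integrable_const _),
            integral_sub intY4 ((intYsq i).const_mul (2*v)), integral_const_mul, hβ i, hv i,
            integral_const]
          simp
          ring
  -- independence consequences
  have EYY : ∀ i j, i ≠ j → ∫ ω, Y i ω * Y j ω ∂μ = 0 := fun i j hij => by
    have h := (hindep.indepFun hij).integral_mul_eq_mul_integral (intY i).aestronglyMeasurable (intY j).aestronglyMeasurable
    rw [h0 i, zero_mul] at h; exact h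
  have Esq : ∀ i j, i ≠ j → ∫ ω, (Y i ω ^ 2) * (Y j ω ^ 2) ∂μ = v * v := fun i j hij => by
    have hi : IndepFun (fun ω => Y i ω ^ 2) (fun ω => Y j ω ^ 2) μ :=
      (hindep.indepFun hij).comp (measurable_id.pow_const 2) (measurable_id.pow_const 2)
    have h := hi.integral_mul_eq_mul_integral (intYsq i).aestronglyMeasurable (intYsq j).aestronglyMeasurable
    rw [hv i, hv j] at h; exact h
  have EZZoff : ∀ i j, i ≠ j → ∫ ω, Z i ω * Z j ω ∂μ = 0 := fun i j hij => by
    have hφ : Measurable (fun x : ℝ => x ^ 2 - v) :=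
      (measurable_id.pow_const 2).sub measurable_const
    have hi : IndepFun (Z i) (Z j) μ := (hindep.indepFun hij).comp hφ hφ
    have h := hi.integral_mul_eq_mul_integral (intZ i).aestronglyMeasurable (intZ j).aestronglyMeasurable
    rw [EZ i, zero_mul] at h; exact h
  have E1off : ∀ a b c d : Fin n, a ≠ b → a ≠ c → a ≠ d →
      ∫ ω, Y a ω * (Y b ω * Y c ω * Y d ω) ∂μ = 0 := by
    intro a b c d hab hac had
    have hdisj : Disjoint ({a} : Finset (Fin n)) {b, c, d} := by
      simp [Finset.disjoint_left, hab, hac, had]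
    have hbase := hindep.indepFun_finset {a} {b, c, d} hdisj hmeas
    have hb : b ∈ ({b, c, d} : Finset (Fin n)) := by simp
    have hc : c ∈ ({b, c, d} : Finset (Fin n)) := by simp
    have hd : d ∈ ({b, c, d} : Finset (Fin n)) := by simp
    have ha : a ∈ ({a} : Finset (Fin n)) := by simp
    have hφ : Measurable (fun w : (({a} : Finset (Fin n)) → ℝ) => w ⟨a, ha⟩) :=
      measurable_pi_apply _
    have hψ : Measurable (fun w : ((({b, c, d}) : Finset (Fin n)) → ℝ) =>
        w ⟨b, hb⟩ * w ⟨c, hc⟩ * w ⟨d, hd⟩) :=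
      by fun_prop
    have hi : IndepFun (Y a) (fun ω => Y b ω * Y c ω * Y d ω) μ := hbase.comp hφ hψ
    have h := hi.integral_mul_eq_mul_integral (intY a).aestronglyMeasurable (intYYY b c d).aestronglyMeasurable
    rw [h0 a, zero_mul] at h; exact h
  have EZYY : ∀ i j k, j ≠ k → ∫ ω, Z i ω * (Y j ω * Y k ω) ∂μ = 0 := by
    intro i j k hjk
    have hφ3 : Measurable fun x : ℝ => (x ^ 2 - v) * x :=
      ((measurable_id.pow_const 2).sub measurable_const).mul measurable_id
    by_cases hij : i = j
    · subst hij
      rw [show (∫ ω, Z i ω * (Y i ω * Y k ω) ∂μ) = ∫ ω, (Z i ω * Y i ω) * Y k ω ∂μ from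
        integral_congr_ae (Filter.Eventually.of_forall fun ω => by ring)]
      have hi : IndepFun (fun ω => Z i ω * Y i ω) (Y k) μ :=
        (hindep.indepFun hjk).comp hφ3 measurable_id
      have h := hi.integral_mul_eq_mul_integral (intZY i i).aestronglyMeasurable (intY k).aestronglyMeasurable
      rw [h0 k, mul_zero] at h; exact h
    · by_cases hik : i = k
      · subst hik
        rw [show (∫ ω, Z i ω * (Y j ω * Y i ω) ∂μ) = ∫ ω, (Z i ω * Y i ω) * Y j ω ∂μ from
          integral_congr_ae (Filter.Eventually.of_forall fun ω => by ring)]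
        have hi : IndepFun (fun ω => Z i ω * Y i ω) (Y j) μ :=
          (hindep.indepFun (Ne.symm hjk)).comp hφ3 measurable_id
        have h := hi.integral_mul_eq_mul_integral (intZY i i).aestronglyMeasurable (intY j).aestronglyMeasurable
        rw [h0 j, mul_zero] at h; exact h
      · have hbase := hindep.indepFun_prodMk hmeas j k i
          (fun h => hij h.symm) (fun h => hik h.symm)
        have hi : IndepFun (fun ω => Y j ω * Y k ω) (Z i) μ :=
          hbase.comp (measurable_fst.mul measurable_snd)
            ((measurable_id.pow_const 2).sub measurable_const)
        rw [show (∫ ω, Z i ω * (Y j ω * Y k ω) ∂μ) = ∫ ω, (Y j ω * Y k ω) * Z i ω ∂μ from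
          integral_congr_ae (Filter.Eventually.of_forall fun ω => by ring)]
        have h := hi.integral_mul_eq_mul_integral (intYY j k).aestronglyMeasurable (intZ i).aestronglyMeasurable
        rw [EZ i, mul_zero] at h; exact h
  have E4diag : ∀ i j, i ≠ j → ∫ ω, (Y i ω * Y j ω) * (Y i ω * Y j ω) ∂μ = v ^ 2 := by
    intro i j hij
    rw [show (∫ ω, (Y i ω * Y j ω) * (Y i ω * Y j ω) ∂μ)
        = ∫ ω, (Y i ω ^ 2) * (Y j ω ^ 2) ∂μ from
      integral_congr_ae (Filter.Eventually.of_forall fun ω => by ring), Esq i j hij]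
    ring
  have E4zero : ∀ i j k l : Fin n, i ≠ j → k ≠ l → ¬(k = i ∧ l = j) → ¬(k = j ∧ l = i) →
      ∫ ω, (Y i ω * Y j ω) * (Y k ω * Y l ω) ∂μ = 0 := by
    intro i j k l hij hkl h1 h2
    by_cases hik : i = k
    · subst hik
      have hlj : l ≠ j := fun h => h1 ⟨rfl, h⟩
      rw [show (∫ ω, (Y i ω * Y j ω) * (Y i ω * Y l ω) ∂μ)
          = ∫ ω, Y j ω * (Y i ω * Y i ω * Y l ω) ∂μ from
        integral_congr_ae (Filter.Eventually.of_forall fun ω => by ring)]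
      exact E1off j i i l (Ne.symm hij) (Ne.symm hij) (Ne.symm hlj)
    · by_cases hil : i = l
      · subst hil
        have hkj : k ≠ j := fun h => h2 ⟨h, rfl⟩
        rw [show (∫ ω, (Y i ω * Y j ω) * (Y k ω * Y i ω) ∂μ)
            = ∫ ω, Y j ω * (Y i ω * Y k ω * Y i ω) ∂μ from
          integral_congr_ae (Filter.Eventually.of_forall fun ω => by ring)]
        exact E1off j i k i (Ne.symm hij) (Ne.symm hkj) (Ne.symm hij)
      · rw [show (∫ ω, (Y i ω * Y j ω) * (Y k ω * Y l ω) ∂μ)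
            = ∫ ω, Y i ω * (Y j ω * Y k ω * Y l ω) ∂μ from
          integral_congr_ae (Filter.Eventually.of_forall fun ω => by ring)]
        exact E1off i j k l hij hik hil
  -- numeric facts
  have hn2 : (2 : ℝ) ≤ (n : ℝ) := by exact_mod_cast hn
  have hn0 : (n : ℝ) ≠ 0 := by linarith
  have hn1 : (n : ℝ) - 1 ≠ 0 := by linarith
  set od := (Finset.univ : Finset (Fin n)).offDiag with hod
  -- pointwise expansion
  have hfun : ∀ ω : Ω,
      ((1 / ((n : ℝ) - 1)) * ∑ i, (Y i ω - (1 / (n:ℝ)) * ∑ j, Y j ω) ^ 2 - v) ^ 2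
      = (1/(n:ℝ)) ^ 2 * (∑ i, ∑ j, Z i ω * Z j ω)
        - 2 * ((1/(n:ℝ)) * (1/((n:ℝ)*((n:ℝ)-1))))
            * (∑ i, ∑ p ∈ od, Z i ω * (Y p.1 ω * Y p.2 ω))
        + (1/((n:ℝ)*((n:ℝ)-1))) ^ 2
            * (∑ p ∈ od, ∑ q ∈ od, (Y p.1 ω * Y p.2 ω) * (Y q.1 ω * Y q.2 ω)) := by
    intro ω
    simp only [hZ]
    have hd := sample_var_decomp hn v (fun i => Y i ω)
    beta_reduce at hd
    rw [hd]
    have e1 : (∑ i, (Y i ω ^ 2 - v)) * (∑ j, (Y j ω ^ 2 - v))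
        = ∑ i, ∑ j, (Y i ω ^ 2 - v) * (Y j ω ^ 2 - v) := Finset.sum_mul_sum _ _ _ _
    have e2 : (∑ i, (Y i ω ^ 2 - v)) * (∑ p ∈ od, Y p.1 ω * Y p.2 ω)
        = ∑ i, ∑ p ∈ od, (Y i ω ^ 2 - v) * (Y p.1 ω * Y p.2 ω) := Finset.sum_mul_sum _ _ _ _
    have e3 : (∑ p ∈ od, Y p.1 ω * Y p.2 ω) * (∑ q ∈ od, Y q.1 ω * Y q.2 ω)
        = ∑ p ∈ od, ∑ q ∈ od, (Y p.1 ω * Y p.2 ω) * (Y q.1 ω * Y q.2 ω) :=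
      Finset.sum_mul_sum _ _ _ _
    rw [← e1, ← e2, ← e3]
    ring
  -- integrability of the three sums
  have intS1 : Integrable (fun ω => ∑ i, ∑ j, Z i ω * Z j ω) μ :=
    integrable_finset_sum _ fun i _ => integrable_finset_sum _ fun j _ => intZZ i j
  have intS2 : Integrable (fun ω => ∑ i, ∑ p ∈ od, Z i ω * (Y p.1 ω * Y p.2 ω)) μ :=
    integrable_finset_sum _ fun i _ => integrable_finset_sum _ fun p _ => intZYY i p.1 p.2
  have intS3 : Integrable
      (fun ω => ∑ p ∈ od, ∑ q ∈ od, (Y p.1 ω * Y p.2 ω) * (Y q.1 ω * Y q.2 ω)) μ :=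
    integrable_finset_sum _ fun p _ => integrable_finset_sum _ fun q _ => intYYYY p.1 p.2 q.1 q.2
  -- the three integrals
  have ES1 : ∫ ω, ∑ i, ∑ j, Z i ω * Z j ω ∂μ = (n:ℝ) * (β - v ^ 2) := by
    rw [integral_finset_sum _ (fun i _ => integrable_finset_sum _ fun j _ => intZZ i j)]
    have step : ∀ i : Fin n, (∫ ω, ∑ j, Z i ω * Z j ω ∂μ) = β - v ^ 2 := by
      intro i
      rw [integral_finset_sum _ (fun j _ => intZZ i j)]
      calc ∑ j, ∫ ω, Z i ω * Z j ω ∂μ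
          = ∑ j, (if j = i then β - v ^ 2 else 0) := by
            refine Finset.sum_congr rfl fun j _ => ?_
            by_cases hj : j = i
            · subst hj; simp [EZZdiag j]
            · simp [hj, EZZoff i j (fun h => hj h.symm)]
        _ = β - v ^ 2 := by simp
    rw [Finset.sum_congr rfl (fun i _ => step i), Finset.sum_const, Finset.card_univ,
      Fintype.card_fin, nsmul_eq_mul]
  have ES2 : ∫ ω, ∑ i, ∑ p ∈ od, Z i ω * (Y p.1 ω * Y p.2 ω) ∂μ = 0 := by
    rw [integral_finset_sum _ (fun i _ => integrable_finset_sum _ fun p _ => intZYY i p.1 p.2)]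
    refine Finset.sum_eq_zero fun i _ => ?_
    rw [integral_finset_sum _ (fun p _ => intZYY i p.1 p.2)]
    refine Finset.sum_eq_zero fun p hp => ?_
    exact EZYY i p.1 p.2 (Finset.mem_offDiag.mp hp).2.2
  have ES3 : ∫ ω, ∑ p ∈ od, ∑ q ∈ od, (Y p.1 ω * Y p.2 ω) * (Y q.1 ω * Y q.2 ω) ∂μ
      = ((n:ℝ) * (n:ℝ) - (n:ℝ)) * (2 * v ^ 2) := by
    rw [integral_finset_sum _
      (fun p _ => integrable_finset_sum _ fun q _ => intYYYY p.1 p.2 q.1 q.2)]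
    have step : ∀ p ∈ od,
        (∫ ω, ∑ q ∈ od, (Y p.1 ω * Y p.2 ω) * (Y q.1 ω * Y q.2 ω) ∂μ) = 2 * v ^ 2 := by
      intro p hp
      have hp12 : p.1 ≠ p.2 := (Finset.mem_offDiag.mp hp).2.2
      have hpswap : p.swap ∈ od := by
        simp only [hod, Finset.mem_offDiag] at hp ⊢
        exact ⟨hp.2.1, hp.1, Ne.symm hp.2.2⟩
      have hps : p.swap ≠ p := by
        intro h
        apply hp12
        have := congrArg Prod.fst h
        simpa [Prod.fst_swap] using this.symm
      rw [integral_finset_sum _ (fun q _ => intYYYY p.1 p.2 q.1 q.2)]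
      calc ∑ q ∈ od, ∫ ω, (Y p.1 ω * Y p.2 ω) * (Y q.1 ω * Y q.2 ω) ∂μ
          = ∑ q ∈ od, ((if q = p then v ^ 2 else 0) + (if q = p.swap then v ^ 2 else 0)) := by
            refine Finset.sum_congr rfl fun q hq => ?_
            have hq12 : q.1 ≠ q.2 := (Finset.mem_offDiag.mp hq).2.2
            by_cases h1 : q = p
            · subst h1
              have hqs : q ≠ q.swap := fun h => hps (by rw [← h])
              rw [if_pos rfl, if_neg hqs, E4diag q.1 q.2 hq12]
              ring
            · by_cases h2 : q = p.swap
              · subst h2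
                rw [if_neg h1, if_pos rfl]
                rw [show (∫ ω, (Y p.1 ω * Y p.2 ω) * (Y (p.swap).1 ω * Y (p.swap).2 ω) ∂μ)
                    = ∫ ω, (Y p.1 ω * Y p.2 ω) * (Y p.1 ω * Y p.2 ω) ∂μ from
                  integral_congr_ae (Filter.Eventually.of_forall fun ω => by
                    simp only [Prod.fst_swap, Prod.snd_swap]; ring)]
                rw [E4diag p.1 p.2 hp12]
                ring
              · rw [if_neg h1, if_neg h2, add_zero]
                refine E4zero p.1 p.2 q.1 q.2 hp12 hq12 ?_ ?_
                · intro hcon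
                  exact h1 (Prod.ext hcon.1 hcon.2)
                · intro hcon
                  refine h2 (Prod.ext ?_ ?_)
                  · simpa [Prod.fst_swap] using hcon.1
                  · simpa [Prod.snd_swap] using hcon.2
        _ = 2 * v ^ 2 := by
            rw [Finset.sum_add_distrib, Finset.sum_ite_eq' od p (fun _ => v ^ 2),
              Finset.sum_ite_eq' od p.swap (fun _ => v ^ 2), if_pos hp, if_pos hpswap]
            ring
    rw [Finset.sum_congr rfl step, Finset.sum_const, nsmul_eq_mul, hod,
      Finset.offDiag_card, Finset.card_univ, Fintype.card_fin]
    have hcast : ((n * n - n : ℕ) : ℝ) = (n:ℝ) * (n:ℝ) - (n:ℝ) := by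
      have h1 : n ≤ n * n := Nat.le_mul_of_pos_left n (by omega)
      push_cast [Nat.cast_sub h1]
      ring
    rw [hcast]
  -- assemble
  have hA : Integrable (fun ω => (1/(n:ℝ)) ^ 2 * (∑ i, ∑ j, Z i ω * Z j ω)) μ :=
    intS1.const_mul _
  have hB : Integrable (fun ω => 2 * ((1/(n:ℝ)) * (1/((n:ℝ)*((n:ℝ)-1))))
      * (∑ i, ∑ p ∈ od, Z i ω * (Y p.1 ω * Y p.2 ω))) μ := intS2.const_mul _
  have hC : Integrable (fun ω => (1/((n:ℝ)*((n:ℝ)-1))) ^ 2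
      * (∑ p ∈ od, ∑ q ∈ od, (Y p.1 ω * Y p.2 ω) * (Y q.1 ω * Y q.2 ω))) μ :=
    intS3.const_mul _
  have hAB : Integrable (fun ω => (1/(n:ℝ)) ^ 2 * (∑ i, ∑ j, Z i ω * Z j ω)
      - 2 * ((1/(n:ℝ)) * (1/((n:ℝ)*((n:ℝ)-1))))
        * (∑ i, ∑ p ∈ od, Z i ω * (Y p.1 ω * Y p.2 ω))) μ := hA.sub hB
  set i0 : Fin n := ⟨0, by omega⟩ with hi0
  have hv2β : v ^ 2 ≤ β := by
    have h1 : 0 ≤ β - v ^ 2 := by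
      rw [← EZZdiag i0]
      exact integral_nonneg fun ω => mul_self_nonneg _
    linarith
  have hβ0 : 0 ≤ β := by
    rw [← hβ i0]
    exact integral_nonneg fun ω => by positivity
  calc ∫ ω, ((1 / ((n : ℝ) - 1)) * ∑ i, (Y i ω - (1 / (n:ℝ)) * ∑ j, Y j ω) ^ 2 - v) ^ 2 ∂μ
      = (1/(n:ℝ)) ^ 2 * ((n:ℝ) * (β - v ^ 2))
        - 2 * ((1/(n:ℝ)) * (1/((n:ℝ)*((n:ℝ)-1)))) * 0
        + (1/((n:ℝ)*((n:ℝ)-1))) ^ 2 * (((n:ℝ) * (n:ℝ) - (n:ℝ)) * (2 * v ^ 2)) := by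
        rw [integral_congr_ae (Filter.Eventually.of_forall hfun),
          integral_add hAB hC, integral_sub hA hB,
          integral_const_mul, integral_const_mul, integral_const_mul, ES1, ES2, ES3]
    _ ≤ (4 / (n:ℝ)) * β := by
        have e1 : (1/(n:ℝ)) ^ 2 * ((n:ℝ) * (β - v ^ 2)) = (β - v ^ 2) / (n:ℝ) := by
          field_simp
        have e2 : (1/((n:ℝ)*((n:ℝ)-1))) ^ 2 * (((n:ℝ) * (n:ℝ) - (n:ℝ)) * (2 * v ^ 2))
            = 2 * v ^ 2 / ((n:ℝ) * ((n:ℝ)-1)) := by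
          field_simp
        rw [e1, e2, mul_zero, sub_zero]
        have hNpos : (0:ℝ) < (n:ℝ) := by linarith
        have hN1pos : (0:ℝ) < (n:ℝ) - 1 := by linarith
        calc (β - v ^ 2) / (n:ℝ) + 2 * v ^ 2 / ((n:ℝ) * ((n:ℝ)-1))
            ≤ β / (n:ℝ) + 2 * v ^ 2 / (n:ℝ) := by
              gcongr <;> nlinarith [sq_nonneg v, hn2]
          _ ≤ (4 / (n:ℝ)) * β := by
              rw [← add_div, div_le_iff₀ hNpos]
              have h4 : 4 / (n:ℝ) * β * (n:ℝ) = 4 * β := by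
                field_simp
              rw [h4]
              nlinarith

end Aux

/-- Moment bound for the sample variance: for i.i.d. real random variables
`X_1,…,X_n` (`n ≥ 2`) with finite fourth moment, mean `m` and variance `v`, the
sample variance `s² = (1/(n-1)) Σ (X_i − X̄)²` satisfies
`E[(s² − v)²] ≤ (4/n)·E[(X_1 − m)⁴]`. -/
theorem stmt_8 {Ω : Type*} [MeasurableSpace Ω] (μ : Measure Ω) [IsProbabilityMeasure μ]
    (n : ℕ) (hn : 2 ≤ n) (X : Fin n → Ω → ℝ)
    (hindep : iIndepFun X μ)
    (hident : ∀ i j, IdentDistrib (X i) (X j) μ μ)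
    (hL4 : ∀ i, MemLp (X i) 4 μ)
    (m v : ℝ)
    (hm : ∀ i, ∫ ω, X i ω ∂μ = m)
    (hv : ∀ i, ∫ ω, (X i ω - m) ^ 2 ∂μ = v) :
    ∫ ω, ((1 / ((n : ℝ) - 1)) * ∑ i, (X i ω - (1 / (n : ℝ)) * ∑ j, X j ω) ^ 2 - v) ^ 2 ∂μ
      ≤ (4 / n) * ∫ ω, (X ⟨0, by omega⟩ ω - m) ^ 4 ∂μ := by
  classical
  set i0 : Fin n := ⟨0, by omega⟩ with hi0
  set X' : Fin n → Ω → ℝ := fun i => (hL4 i).1.mk (X i) with hX'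
  have hae : ∀ i, X i =ᵐ[μ] X' i := fun i => (hL4 i).1.ae_eq_mk
  have hmeas' : ∀ i, Measurable (X' i) := fun i => (hL4 i).1.stronglyMeasurable_mk.measurable
  set Y : Fin n → Ω → ℝ := fun i ω => X' i ω - m with hY
  have hmeasY : ∀ i, Measurable (Y i) := fun i => (hmeas' i).sub measurable_const
  have hindep' : iIndepFun X' μ := iIndepFun_congr_ae hindep hae
  have hindepY : iIndepFun Y μ :=
    hindep'.comp (fun _ x => x - m) (fun _ => measurable_id.sub measurable_const)
  have hL4X' : ∀ i, MemLp (X' i) 4 μ := fun i => (hL4 i).ae_eq (hae i)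
  have hL4Y : ∀ i, MemLp (Y i) 4 μ := fun i => (hL4X' i).sub (memLp_const m)
  have haeY : ∀ i, (fun ω => X i ω - m) =ᵐ[μ] Y i := fun i => by
    filter_upwards [hae i] with ω hω
    simp [hY, hω]
  have hintX : ∀ i, Integrable (X i) μ := fun i => (hL4 i).integrable (by norm_num)
  have h0 : ∀ i, ∫ ω, Y i ω ∂μ = 0 := fun i => by
    rw [← integral_congr_ae (haeY i), integral_sub (hintX i) (integrable_const m), hm i,
      integral_const]
    simp
  have hvY : ∀ i, ∫ ω, (Y i ω) ^ 2 ∂μ = v := fun i => by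
    have h1 : (fun ω => (X i ω - m) ^ 2) =ᵐ[μ] fun ω => (Y i ω) ^ 2 := by
      filter_upwards [haeY i] with ω hω
      rw [hω]
    rw [← integral_congr_ae h1, hv i]
  have hβY : ∀ i, ∫ ω, (Y i ω) ^ 4 ∂μ = ∫ ω, (X i0 ω - m) ^ 4 ∂μ := fun i => by
    have h1 : (fun ω => (X i ω - m) ^ 4) =ᵐ[μ] fun ω => (Y i ω) ^ 4 := by
      filter_upwards [haeY i] with ω hω
      rw [hω]
    have h2 : ∫ ω, (X i ω - m) ^ 4 ∂μ = ∫ ω, (X i0 ω - m) ^ 4 ∂μ := by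
      have hid := (hident i i0).comp (u := fun x : ℝ => (x - m) ^ 4) (by fun_prop)
      exact hid.integral_eq
    rw [← integral_congr_ae h1, h2]
  have hLHS : ∫ ω, ((1/((n:ℝ)-1)) * ∑ i, (X i ω - (1/(n:ℝ)) * ∑ j, X j ω) ^ 2 - v) ^ 2 ∂μ
      = ∫ ω, ((1/((n:ℝ)-1)) * ∑ i, (Y i ω - (1/(n:ℝ)) * ∑ j, Y j ω) ^ 2 - v) ^ 2 ∂μ := by
    apply integral_congr_ae
    have hall : ∀ᵐ ω ∂μ, ∀ i, X i ω = X' i ω := ae_all_iff.2 hae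
    filter_upwards [hall] with ω hω
    have hn0 : (n:ℝ) ≠ 0 := by
      have h2n : (2:ℝ) ≤ (n:ℝ) := by exact_mod_cast hn
      linarith
    have hXY : ∀ i, X i ω = Y i ω + m := fun i => by rw [hω i]; simp [hY]
    have hsum : ∑ j, X j ω = (∑ j, Y j ω) + (n:ℝ) * m := by
      rw [Finset.sum_congr rfl (fun j (_ : j ∈ Finset.univ) => hXY j), Finset.sum_add_distrib,
        Finset.sum_const, Finset.card_univ, Fintype.card_fin, nsmul_eq_mul]
    have hterm : ∀ i, X i ω - (1/(n:ℝ)) * ∑ j, X j ω = Y i ω - (1/(n:ℝ)) * ∑ j, Y j ω := by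
      intro i
      rw [hXY i, hsum]
      field_simp
      ring
    rw [Finset.sum_congr rfl (fun i (_ : i ∈ Finset.univ) => by rw [hterm i])]
  rw [hLHS]
  exact key_lemma hn Y hmeasY hindepY hL4Y v _ h0 hvY hβY
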